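/- Let f be a differentiable probability density function on (0,∞) with finite mean, positive on (0,∞), belonging to the Pearson family: f′(x)/f(x) = −(x + d)/(A₀ + A₁x + A₂x²) for all x > 0, where d, A₀, A₁, A₂ are real constants with A₂ ≠ 1/2 and A₀ + A₁x + A₂x² ≠ 0 on (0,∞). Assume moreover that (A₀ + A₁x + A₂x²) f(x) → 0 as x → ∞. Then for every t > 0 with F̄(t) > 0, E(X | X > t) = (A₁ − d)/(1 − 2A₂) + ((A₀ + A₁t + A₂t²)/(1 − 2A₂)) r(t). -/

import Mathlib

open MeasureTheory

/-- For a differentiable density `f` on `(0,∞)` with finite mean,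
positive on `(0,∞)`, in the Pearson family
`f′(x)/f(x) = -(x + d)/(A₀ + A₁ x + A₂ x²)` with `A₂ ≠ 1/2`, the quadratic
nonvanishing on `(0,∞)`, and `(A₀ + A₁ x + A₂ x²) f(x) → 0` as `x → ∞`, for
every `t > 0` with `F̄(t) > 0`:
`E(X | X > t) = (A₁ - d)/(1 - 2A₂) + ((A₀ + A₁ t + A₂ t²)/(1 - 2A₂)) r(t)`. -/
theorem conditional_mean_of_pearson_family
    (f : ℝ → ℝ) (hf_pos : ∀ x, 0 < x → 0 < f x) (hf_supp : ∀ x, x ≤ 0 → f x = 0)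
    (hf_int : IntegrableOn f (Set.Ioi 0)) (hf_prob : ∫ x in Set.Ioi (0 : ℝ), f x = 1)
    (hmean : IntegrableOn (fun x => x * f x) (Set.Ioi 0))
    (d A₀ A₁ A₂ : ℝ) (hA₂ : A₂ ≠ 1 / 2)
    (hquad : ∀ x, 0 < x → A₀ + A₁ * x + A₂ * x ^ 2 ≠ 0)
    (f' : ℝ → ℝ) (hderiv : ∀ x, 0 < x → HasDerivAt f (f' x) x)
    (hPearson : ∀ x, 0 < x →
      f' x / f x = -(x + d) / (A₀ + A₁ * x + A₂ * x ^ 2))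
    (hlim : Filter.Tendsto (fun x => (A₀ + A₁ * x + A₂ * x ^ 2) * f x)
      Filter.atTop (nhds 0))
    (Fbar : ℝ → ℝ) (hFbar : ∀ t, Fbar t = ∫ x in Set.Ioi t, f x)
    (r : ℝ → ℝ) (hr : ∀ t, r t = f t / Fbar t)
    (t : ℝ) (ht : 0 < t) (hpos : 0 < Fbar t) :
    (∫ x in Set.Ioi t, x * f x) / Fbar t
      = (A₁ - d) / (1 - 2 * A₂) + ((A₀ + A₁ * t + A₂ * t ^ 2) / (1 - 2 * A₂)) * r t := by
  set g : ℝ → ℝ := fun x => (A₀ + A₁ * x + A₂ * x ^ 2) * f x with hg_def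
  have h2A : (1 - 2 * A₂) ≠ 0 := by intro h; apply hA₂; linarith
  have hgderiv : ∀ x, 0 < x → HasDerivAt g
      ((A₁ - d) * f x + (2 * A₂ - 1) * (x * f x)) x := by
    intro x hx0
    have hq : HasDerivAt (fun x : ℝ => A₀ + A₁ * x + A₂ * x ^ 2)
        (A₁ + 2 * A₂ * x) x := by
      have h1 := (hasDerivAt_id x).const_mul A₁
      have h2 := (hasDerivAt_pow 2 x).const_mul A₂
      have := ((hasDerivAt_const x A₀).add h1).add h2
      refine this.congr_deriv ?_
      simp; ring
    have hmul := hq.mul (hderiv x hx0)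
    have hf0 : f x ≠ 0 := (hf_pos x hx0).ne'
    have hQ : A₀ + A₁ * x + A₂ * x ^ 2 ≠ 0 := hquad x hx0
    have hP := hPearson x hx0
    have hcross : (A₀ + A₁ * x + A₂ * x ^ 2) * f' x = -(x + d) * f x := by
      rw [div_eq_div_iff hf0 hQ] at hP
      linarith [hP]
    refine hmul.congr_deriv ?_
    rw [hcross]; ring
  have hcw : ContinuousWithinAt g (Set.Ici t) t :=
    (hgderiv t ht).continuousAt.continuousWithinAt
  have hsub : Set.Ioi t ⊆ Set.Ioi (0 : ℝ) := Set.Ioi_subset_Ioi ht.le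
  have hfI : IntegrableOn f (Set.Ioi t) := hf_int.mono_set hsub
  have hmI : IntegrableOn (fun x => x * f x) (Set.Ioi t) := hmean.mono_set hsub
  have hGint : IntegrableOn
      (fun x => (A₁ - d) * f x + (2 * A₂ - 1) * (x * f x)) (Set.Ioi t) :=
    (hfI.const_mul _).add (hmI.const_mul _)
  have key : ∫ x in Set.Ioi t, ((A₁ - d) * f x + (2 * A₂ - 1) * (x * f x))
      = 0 - g t :=
    integral_Ioi_of_hasDerivAt_of_tendsto hcw
      (fun x hx => hgderiv x (lt_trans ht hx)) hGint hlim
  rw [integral_add ((hfI.const_mul _)) ((hmI.const_mul _)),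
    MeasureTheory.integral_const_mul, MeasureTheory.integral_const_mul] at key
  have hFb : Fbar t = ∫ x in Set.Ioi t, f x := hFbar t
  rw [← hFb] at key
  have hFb0 : Fbar t ≠ 0 := hpos.ne'
  rw [hr]
  have hgt : g t = (A₀ + A₁ * t + A₂ * t ^ 2) * f t := rfl
  field_simp
  linear_combination (-1 : ℝ) * key + hgt
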